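/- arXiv:2009.05692 — 2 statements merged into one kernel-verified Lean document; each statement's English description precedes it below -/
import Mathlib

section
/- For every n ≥ 1 and every choice of signs x₁, …, xₙ ∈ {−1, 1}, the polynomial ∑_{i=1}^n xᵢ Tᵢ satisfies ‖∑_{i=1}^n xᵢ Tᵢ‖∞ ≥ √(n/2). -/
open Polynomial Real

lemma sum_cos_odd (N : ℕ) (α : ℝ) (hs : Real.sin α ≠ 0)
    (h0 : Real.sin (2 * N * α) = 0) :
    ∑ k ∈ Finset.range N, Real.cos ((2 * k + 1) * α) = 0 := by
  have key : ∀ k : ℕ, Real.sin (2 * (k + 1) * α) - Real.sin (2 * k * α)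
      = 2 * Real.sin α * Real.cos ((2 * k + 1) * α) := by
    intro k
    have h1 : (2 * ((k : ℝ) + 1)) * α = (2 * k + 1) * α + α := by ring
    have h2 : (2 * (k : ℝ)) * α = (2 * k + 1) * α - α := by ring
    rw [h1, h2, Real.sin_add, Real.sin_sub]; ring
  have tele := Finset.sum_range_sub (fun k : ℕ => Real.sin (2 * k * α)) N
  push_cast at tele
  simp only [key] at tele
  rw [← Finset.mul_sum] at tele
  have h2s : (2 : ℝ) * Real.sin α ≠ 0 := by
    simpa using hs
  have : (2 * Real.sin α) * ∑ k ∈ Finset.range N, Real.cos ((2 * k + 1) * α) = 0 := by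
    rw [tele]; simpa using h0
  exact (mul_eq_zero.mp this).resolve_left h2s

lemma sum_cos_node (N : ℕ) (hN : 0 < N) (d : ℤ) (hd : d ≠ 0) (hd2 : |d| < 2 * N) :
    ∑ k ∈ Finset.range N, Real.cos (d * ((2 * k + 1) * π / (2 * N))) = 0 := by
  have hNpos : (0 : ℝ) < 2 * N := by positivity
  have hcongr : ∀ k : ℕ, Real.cos (d * ((2 * k + 1) * π / (2 * N)))
      = Real.cos ((2 * k + 1) * (d * π / (2 * N))) := by
    intro k; ring_nf
  simp only [hcongr]
  apply sum_cos_odd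
  · intro h
    rw [Real.sin_eq_zero_iff] at h
    obtain ⟨m, hm⟩ := h
    have h2 : (2 * (N:ℝ) * m) * π = (d : ℝ) * π := by
      field_simp at hm
      linear_combination π * hm
    have h3 := mul_right_cancel₀ Real.pi_ne_zero h2
    have hdm : 2 * (N:ℤ) * m = d := by exact_mod_cast h3
    have hdm : d = 2 * N * m := hdm.symm
    rcases eq_or_ne m 0 with rfl | hm0
    · simp at hdm; omega
    · have : (2 : ℤ) * N ≤ |d| := by
        rw [hdm, abs_mul]
        have : (1:ℤ) ≤ |m| := Int.one_le_abs hm0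
        have h2 : |(2 * N : ℤ)| = 2 * N := abs_of_nonneg (by positivity)
        nlinarith
      omega
  · have : 2 * (N : ℝ) * (d * π / (2 * N)) = d * π := by
      field_simp
    rw [this, Real.sin_int_mul_pi]

lemma ortho (N : ℕ) (i j : ℕ) (hi : 1 ≤ i) (hi2 : i < N) (hj : 1 ≤ j) (hj2 : j < N) :
    ∑ k ∈ Finset.range N,
        Real.cos (i * ((2 * k + 1) * π / (2 * N))) * Real.cos (j * ((2 * k + 1) * π / (2 * N)))
      = if i = j then (N : ℝ) / 2 else 0 := by
  have hN : 0 < N := lt_of_le_of_lt (Nat.zero_le _) hi2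
  have hpt : ∀ t : ℝ, Real.cos (i * t) * Real.cos (j * t)
      = (Real.cos ((((i : ℤ) + j) : ℤ) * t) + Real.cos ((((i : ℤ) - j) : ℤ) * t)) / 2 := by
    intro t
    push_cast
    rw [show ((i : ℝ) + j) * t = i * t + j * t by ring,
      show ((i : ℝ) - j) * t = i * t - j * t by ring, Real.cos_add, Real.cos_sub]
    ring
  simp only [hpt]
  rw [← Finset.sum_div, Finset.sum_add_distrib]
  have hsum1 : ∑ k ∈ Finset.range N, Real.cos ((((i : ℤ) + j) : ℤ) * ((2 * k + 1) * π / (2 * N))) = 0 := by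
    apply sum_cos_node N hN
    · omega
    · have : |(i : ℤ) + j| = (i : ℤ) + j := abs_of_nonneg (by positivity)
      omega
  rw [hsum1]
  by_cases hij : i = j
  · subst hij
    have : ∀ k ∈ Finset.range N, Real.cos ((((i : ℤ) - i) : ℤ) * ((2 * k + 1) * π / (2 * N))) = 1 := by
      intro k _; simp
    rw [Finset.sum_congr rfl this]
    simp
  · have hsum2 : ∑ k ∈ Finset.range N, Real.cos ((((i : ℤ) - j) : ℤ) * ((2 * k + 1) * π / (2 * N))) = 0 := by
      apply sum_cos_node N hN
      · omega
      · rw [abs_sub_lt_iff]; omega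
    rw [hsum2]
    simp [hij]

/-- The Chebyshev norm of a real polynomial: `sup_{|x| ≤ 1} |p(x)|`. -/
noncomputable def chebNorm (p : Polynomial ℝ) : ℝ :=
  ⨆ x : Set.Icc (-1 : ℝ) 1, |p.eval (x : ℝ)|

theorem chebyshev_signed_sum_lower_bound (n : ℕ) (hn : 1 ≤ n) (x : ℕ → ℝ)
    (hx : ∀ i, x i = 1 ∨ x i = -1) :
    chebNorm (∑ i ∈ Finset.Icc 1 n, x i • Polynomial.Chebyshev.T ℝ i) ≥
      Real.sqrt (n / 2) := by
  set N := n + 1 with hNdef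
  set p := ∑ i ∈ Finset.Icc 1 n, x i • Polynomial.Chebyshev.T ℝ i with hp
  set θ : ℕ → ℝ := fun k => (2 * k + 1) * π / (2 * N) with hθ
  have hyval : ∀ k, p.eval (Real.cos (θ k)) = ∑ i ∈ Finset.Icc 1 n, x i * Real.cos (i * θ k) := by
    intro k
    rw [hp, Polynomial.eval_finset_sum]
    refine Finset.sum_congr rfl fun i hi => ?_
    rw [Polynomial.eval_smul, smul_eq_mul, Polynomial.Chebyshev.T_real_cos]
    push_cast
    ring
  have hsq : ∑ k ∈ Finset.range N, (p.eval (Real.cos (θ k))) ^ 2 = n * ((N : ℝ) / 2) := by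
    have hterm : ∀ k, (p.eval (Real.cos (θ k))) ^ 2
        = ∑ i ∈ Finset.Icc 1 n, ∑ j ∈ Finset.Icc 1 n,
            (x i * x j) * (Real.cos (i * θ k) * Real.cos (j * θ k)) := by
      intro k
      rw [hyval, sq, Finset.sum_mul_sum]
      exact Finset.sum_congr rfl fun i _ => Finset.sum_congr rfl fun j _ => by ring
    simp only [hterm]
    rw [Finset.sum_comm]
    have hinner : ∀ i ∈ Finset.Icc 1 n,
        ∑ k ∈ Finset.range N, ∑ j ∈ Finset.Icc 1 n,
            (x i * x j) * (Real.cos (i * θ k) * Real.cos (j * θ k))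
          = (N : ℝ) / 2 := by
      intro i hi
      rw [Finset.sum_comm]
      rw [Finset.mem_Icc] at hi
      have hcalc : ∀ j ∈ Finset.Icc 1 n,
          ∑ k ∈ Finset.range N, (x i * x j) * (Real.cos (i * θ k) * Real.cos (j * θ k))
            = if i = j then x i * x j * ((N : ℝ) / 2) else 0 := by
        intro j hj
        rw [Finset.mem_Icc] at hj
        rw [← Finset.mul_sum, hθ]
        rw [ortho N i j hi.1 (by omega) hj.1 (by omega)]
        by_cases hij : i = j <;> simp [hij]
      rw [Finset.sum_congr rfl hcalc, Finset.sum_ite_eq (Finset.Icc 1 n) i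
        (fun j => x i * x j * ((N : ℝ) / 2))]
      rw [if_pos (Finset.mem_Icc.mpr hi)]
      rcases hx i with h | h <;> rw [h] <;> ring
    rw [Finset.sum_congr rfl hinner, Finset.sum_const, Nat.card_Icc]
    simp [nsmul_eq_mul]
  -- chebNorm bounds
  set M := chebNorm p with hM
  have hcont : ContinuousOn (fun y : ℝ => p.eval y) (Set.Icc (-1 : ℝ) 1) :=
    (Polynomial.continuous p).continuousOn
  obtain ⟨C, hC⟩ := (isCompact_Icc).exists_bound_of_continuousOn hcont
  have hbdd : BddAbove (Set.range fun y : Set.Icc (-1 : ℝ) 1 => |p.eval (y : ℝ)|) := by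
    refine ⟨C, ?_⟩
    rintro _ ⟨y, rfl⟩
    exact hC y y.2
  have hle : ∀ y ∈ Set.Icc (-1 : ℝ) 1, |p.eval y| ≤ M := by
    intro y hy
    exact le_ciSup hbdd (⟨y, hy⟩ : Set.Icc (-1 : ℝ) 1)
  have hmem : ∀ k, Real.cos (θ k) ∈ Set.Icc (-1 : ℝ) 1 :=
    fun k => ⟨Real.neg_one_le_cos _, Real.cos_le_one _⟩
  have hM0 : 0 ≤ M := le_trans (abs_nonneg _) (hle _ (hmem 0))
  have hsqle : ∀ k, (p.eval (Real.cos (θ k))) ^ 2 ≤ M ^ 2 := by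
    intro k
    rw [← sq_abs]
    exact pow_le_pow_left₀ (abs_nonneg _) (hle _ (hmem k)) 2
  have hsum_le : (n : ℝ) * ((N : ℝ) / 2) ≤ N * M ^ 2 := by
    rw [← hsq]
    calc ∑ k ∈ Finset.range N, (p.eval (Real.cos (θ k))) ^ 2
        ≤ ∑ k ∈ Finset.range N, M ^ 2 := Finset.sum_le_sum fun k _ => hsqle k
      _ = N * M ^ 2 := by rw [Finset.sum_const]; simp [nsmul_eq_mul]
  have hNpos : (0 : ℝ) < N := by positivity
  have hkey : (n : ℝ) / 2 ≤ M ^ 2 := by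
    rw [div_le_iff₀ (by norm_num : (0:ℝ) < 2)]
    nlinarith [hsum_le, hNpos]
  calc Real.sqrt ((n : ℝ) / 2) ≤ Real.sqrt (M ^ 2) := Real.sqrt_le_sqrt hkey
    _ = M := by rw [Real.sqrt_sq hM0]
end

section
/- Let n ≥ 1, let p be a real polynomial of degree at most n, and let θ₀ ∈ [0, π/(9n)] be fixed. If |p(cos(θ₀ + kπ/(9n)))| ≤ 1 for all k ∈ {0, 1, …, 9n − 1}, then ‖p‖∞ < 5/3. -/
open Polynomial Real

noncomputable def Phi (d : ℕ) (r : Polynomial ℝ) : Polynomial ℂ :=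
  ∑ j ∈ Finset.range (d+1), Polynomial.C ((r.coeff j : ℂ) / 2^j) * X^(d-j) * (X^2+1)^j

lemma Phi_degree (d : ℕ) (r : Polynomial ℝ) : (Phi d r).degree ≤ (2*d : ℕ) := by
  refine (Polynomial.degree_sum_le _ _).trans ?_
  rw [Finset.sup_le_iff]
  intro j hj
  simp only [Finset.mem_range] at hj
  have hjd : j ≤ d := Nat.lt_succ_iff.mp hj
  have h2 : ((X^2+1 : Polynomial ℂ)^j).degree ≤ (2*j : ℕ) := by
    refine (Polynomial.degree_le_natDegree).trans ?_
    have h1 : (X^2+1 : Polynomial ℂ).natDegree ≤ 2 := by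
      refine (Polynomial.natDegree_add_le _ _).trans ?_
      simp
    have hnd : ((X^2+1 : Polynomial ℂ)^j).natDegree ≤ 2*j := by
      refine (Polynomial.natDegree_pow_le).trans ?_
      exact le_trans (Nat.mul_le_mul_left j h1) (by omega)
    exact_mod_cast hnd
  calc (Polynomial.C ((r.coeff j : ℂ) / 2^j) * X^(d-j) * (X^2+1)^j).degree
      ≤ (Polynomial.C ((r.coeff j : ℂ) / 2^j)).degree + (X^(d-j) : Polynomial ℂ).degree + ((X^2+1 : Polynomial ℂ)^j).degree := by
        refine (Polynomial.degree_mul_le _ _).trans ?_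
        gcongr
        exact Polynomial.degree_mul_le _ _
    _ ≤ (0 : WithBot ℕ) + ((d-j : ℕ) : WithBot ℕ) + ((2*j : ℕ) : WithBot ℕ) := by
        gcongr
        · exact Polynomial.degree_C_le
        · exact (Polynomial.degree_X_pow _).le
    _ ≤ ((2*d : ℕ) : WithBot ℕ) := by
        rw [zero_add, ← Nat.cast_add]
        exact_mod_cast by omega

lemma Phi_eval (d : ℕ) (r : Polynomial ℝ) (hr : r.natDegree ≤ d) (θ : ℝ) :
    (Phi d r).eval (Complex.exp (θ * Complex.I)) =
      Complex.exp (θ * Complex.I) ^ d * ((r.eval (Real.cos θ) : ℝ) : ℂ) := by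
  set z := Complex.exp (θ * Complex.I) with hz
  have hz0 : z ≠ 0 := Complex.exp_ne_zero _
  have hcos : Complex.cos ↑θ = (z^2 + 1) / (2*z) := by
    rw [Complex.cos, neg_mul, Complex.exp_neg, ← hz]
    field_simp
  have hev : ((r.eval (Real.cos θ) : ℝ) : ℂ) = ∑ j ∈ Finset.range (d+1), (r.coeff j : ℂ) * ((z^2+1)/(2*z))^j := by
    rw [Polynomial.eval_eq_sum_range' (Nat.lt_succ_of_le hr)]
    push_cast
    rw [hcos]
  rw [hev, Phi]
  rw [Polynomial.eval_finset_sum, Finset.mul_sum]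
  apply Finset.sum_congr rfl
  intro j hj
  simp only [Finset.mem_range] at hj
  have hjd : j ≤ d := Nat.lt_succ_iff.mp hj
  simp only [Polynomial.eval_mul, Polynomial.eval_pow, Polynomial.eval_add, Polynomial.eval_one,
    Polynomial.eval_C, Polynomial.eval_X]
  have hzd : z ^ d = z ^ (d - j) * z ^ j := by rw [← pow_add]; congr 1; omega
  rw [hzd, div_pow, mul_pow]
  field_simp

lemma bernstein_aux (n : ℕ) (hn : 1 ≤ n) (p : Polynomial ℝ) (hdeg : p.degree ≤ (n : ℕ)) (M : ℝ)
    (hM : ∀ t : ℝ, |p.eval (Real.cos t)| ≤ M) (θ : ℝ) :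
    (p.derivative.eval (Real.cos θ)) * (-Real.sin θ) ≤ n * M := by
  have hn0 : (n:ℝ) ≠ 0 := by positivity
  have hπ := Real.pi_pos
  set r := p.derivative with hr
  set D : ℝ → ℝ := fun t => (r.eval (Real.cos t)) * (-Real.sin t) with hD
  set q : ℝ → ℝ := fun t => p.eval (Real.cos t) with hq
  -- derivative facts
  have hqD : ∀ t : ℝ, HasDerivAt q (D t) t := by
    intro t
    have := (Polynomial.hasDerivAt p (Real.cos t)).comp t (Real.hasDerivAt_cos t)
    simpa [hq, hD, Function.comp_def] using this
  have hDcont : Continuous D := by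
    have : Continuous fun t : ℝ => r.eval (Real.cos t) :=
      (Polynomial.continuous r).comp Real.continuous_cos
    exact this.mul Real.continuous_sin.neg
  have hDdiff : ∀ t : ℝ, DifferentiableAt ℝ D t := by
    intro t
    have h1 : DifferentiableAt ℝ (fun t : ℝ => r.eval (Real.cos t)) t :=
      ((Polynomial.hasDerivAt r (Real.cos t)).comp t (Real.hasDerivAt_cos t)).differentiableAt
    exact h1.mul (Real.differentiable_sin t).neg
  -- max of D
  obtain ⟨θ₀, hθ₀K, hmax⟩ := (isCompact_Icc (a := (0:ℝ)) (b := 2*π)).exists_isMaxOn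
    ⟨0, by constructor <;> positivity⟩ hDcont.continuousOn
  have hper : Function.Periodic D (2*π) := by
    intro t
    simp [hD, Real.cos_add_two_pi, Real.sin_add_two_pi]
  have hglob : ∀ t : ℝ, D t ≤ D θ₀ := by
    intro t
    obtain ⟨y, hy, hyt⟩ := hper.exists_mem_Ico₀ (by positivity) t
    rw [hyt]
    exact hmax (Set.Ico_subset_Icc_self hy)
  by_cases hB : D θ₀ ≤ n * M
  · exact (hglob θ).trans hB
  exfalso
  push_neg at hB
  set B := D θ₀ with hBdef
  have hM0 : 0 ≤ M := le_trans (abs_nonneg _) (hM 0)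
  have hB0 : 0 < B := lt_of_le_of_lt (by positivity) hB
  set A : ℝ := B / n with hAdef
  have hnA : (n:ℝ) * A = B := by rw [hAdef]; field_simp
  have hMA : M < A := by
    rw [hAdef, lt_div_iff₀ (by positivity : (0:ℝ) < n)]
    linarith [hB, mul_comm (n:ℝ) M]
  have hA0 : 0 < A := lt_of_le_of_lt hM0 hMA
  -- the comparison function
  set h : ℝ → ℝ := fun t => A * Real.sin (n*(t - θ₀)) - q t with hh
  have hsin : ∀ t : ℝ, HasDerivAt (fun t : ℝ => A * Real.sin (n*(t - θ₀)))
      (A * (Real.cos (n*(t - θ₀)) * n)) t := by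
    intro t
    have hu : HasDerivAt (fun t : ℝ => (n:ℝ)*(t - θ₀)) n t := by
      simpa using ((hasDerivAt_id t).sub_const θ₀).const_mul (n:ℝ)
    exact ((Real.hasDerivAt_sin _).comp t hu).const_mul A
  set h₁ : ℝ → ℝ := fun t => n * A * Real.cos (n*(t - θ₀)) - D t with hh₁
  have hh' : ∀ t : ℝ, HasDerivAt h (h₁ t) t := by
    intro t
    have := (hsin t).sub (hqD t)
    refine this.congr_deriv ?_
    simp only [hh₁]; ring
  have hderivh : deriv h = h₁ := funext fun t => (hh' t).deriv
  have hhcont : Continuous h := by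
    have : Differentiable ℝ h := fun t => (hh' t).differentiableAt
    exact this.continuous
  -- second derivative vanishes at θ₀
  have hD'0 : deriv D θ₀ = 0 := by
    have : IsLocalMax D θ₀ := by
      apply IsMaxOn.isLocalMax (s := Set.univ)
      · intro x _; exact hglob x
      · exact Filter.univ_mem
    exact this.deriv_eq_zero
  have hh₁θ₀ : h₁ θ₀ = 0 := by simp [hh₁, hnA, hBdef]
  have hh₁'θ₀ : HasDerivAt h₁ 0 θ₀ := by
    have hc : HasDerivAt (fun t : ℝ => (n:ℝ) * A * Real.cos (n*(t - θ₀)))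
        ((n:ℝ) * A * (-Real.sin (n*(θ₀ - θ₀)) * n)) θ₀ := by
      have hu : HasDerivAt (fun t : ℝ => (n:ℝ)*(t - θ₀)) n θ₀ := by
        simpa using ((hasDerivAt_id θ₀).sub_const θ₀).const_mul (n:ℝ)
      exact ((Real.hasDerivAt_cos _).comp θ₀ hu).const_mul ((n:ℝ)*A)
    have hd := (hDdiff θ₀).hasDerivAt
    rw [hD'0] at hd
    have := hc.sub hd
    rw [hh₁]; exact this.congr_deriv (by simp)
  -- the alternation points
  set t' : ℕ → ℝ := fun j => θ₀ + (2*j+1)*π/(2*n) with ht'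
  have ht'mono : ∀ j : ℕ, t' j < t' (j+1) := by
    intro j
    simp only [ht']
    have h2n : (0:ℝ) < 2*n := by positivity
    rw [add_lt_add_iff_left, div_lt_div_iff₀ h2n h2n]
    push_cast
    nlinarith [hπ]
  have ht'q : ∀ j : ℕ, Real.sin ((n:ℝ)*(t' j - θ₀)) = (-1:ℝ)^j := by
    intro j
    have harg : (n:ℝ)*(t' j - θ₀) = π/2 + j*π := by
      simp only [ht']
      field_simp
      ring
    rw [harg, Real.sin_add_nat_mul_pi, Real.sin_pi_div_two, mul_one]
  have halt : ∀ j : ℕ, A - M ≤ (-1:ℝ)^j * h (t' j) := by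
    intro j
    have h1 : ((-1:ℝ)^j) * ((-1:ℝ)^j) = 1 := by
      rw [← pow_add]
      exact Even.neg_one_pow ⟨j, by ring⟩
    have h2 : (-1:ℝ)^j * q (t' j) ≤ M := by
      calc (-1:ℝ)^j * q (t' j) ≤ |(-1:ℝ)^j * q (t' j)| := le_abs_self _
        _ = |q (t' j)| := by rw [abs_mul, abs_pow, abs_neg, abs_one, one_pow, one_mul]
        _ ≤ M := hM _
    have h3 : h (t' j) = A * (-1:ℝ)^j - q (t' j) := by
      show A * Real.sin ((n:ℝ)*(t' j - θ₀)) - q (t' j) = _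
      rw [ht'q j]
    rw [h3]
    have : (-1:ℝ)^j * (A * (-1:ℝ)^j - q (t' j)) = A * (((-1:ℝ)^j)*((-1:ℝ)^j)) - (-1:ℝ)^j * q (t' j) := by ring
    rw [this, h1, mul_one]
    linarith
  have hAM0 : 0 < A - M := by linarith
  -- zeros of h between alternation points
  have hzero : ∀ j : ℕ, ∃ x, x ∈ Set.Ioo (t' j) (t' (j+1)) ∧ h x = 0 := by
    intro j
    rcases Nat.even_or_odd j with he | ho
    · have h1 := halt j
      have h2 := halt (j+1)
      rw [he.neg_one_pow] at h1
      have hodd : Odd (j+1) := Even.add_one he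
      rw [hodd.neg_one_pow] at h2
      have hmem : (0:ℝ) ∈ Set.Ioo (h (t' (j+1))) (h (t' j)) := by
        constructor <;> [linarith; linarith]
      obtain ⟨x, hx, hx0⟩ := intermediate_value_Ioo' (le_of_lt (ht'mono j)) hhcont.continuousOn hmem
      exact ⟨x, hx, hx0⟩
    · have h1 := halt j
      have h2 := halt (j+1)
      rw [ho.neg_one_pow] at h1
      have heven : Even (j+1) := Odd.add_one ho
      rw [heven.neg_one_pow] at h2
      have hmem : (0:ℝ) ∈ Set.Ioo (h (t' j)) (h (t' (j+1))) := by
        constructor <;> [linarith; linarith]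
      obtain ⟨x, hx, hx0⟩ := intermediate_value_Ioo (le_of_lt (ht'mono j)) hhcont.continuousOn hmem
      exact ⟨x, hx, hx0⟩
  set α : ℕ → ℝ := fun j => (hzero j).choose with hα
  have hαspec : ∀ j : ℕ, α j ∈ Set.Ioo (t' j) (t' (j+1)) ∧ h (α j) = 0 :=
    fun j => (hzero j).choose_spec
  have hαmono : StrictMono α := by
    apply strictMono_nat_of_lt_succ
    intro j
    exact lt_trans (hαspec j).1.2 (hαspec (j+1)).1.1
  -- periodicity of h
  have hhper : ∀ t : ℝ, h (t + 2*π) = h t := by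
    intro t
    show A * Real.sin ((n:ℝ)*(t + 2*π - θ₀)) - q (t + 2*π) = A * Real.sin ((n:ℝ)*(t - θ₀)) - q t
    have e1 : (n:ℝ)*(t + 2*π - θ₀) = (n:ℝ)*(t - θ₀) + n*(2*π) := by ring
    have e2 : q (t + 2*π) = q t := by
      show p.eval (Real.cos (t + 2*π)) = p.eval (Real.cos t)
      rw [Real.cos_add_two_pi]
    rw [e1, Real.sin_add_nat_mul_two_pi, e2]
  -- t' (2n) = t' 0 + 2π
  have ht2n : t' (2*n) = t' 0 + 2*π := by
    simp only [ht']
    push_cast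
    field_simp
    ring
  -- Rolle
  have hrolle : ∀ j : ℕ, ∃ x, x ∈ Set.Ioo (α j) (α (j+1)) ∧ deriv h x = 0 := by
    intro j
    obtain ⟨x, hx1, hx2⟩ := exists_deriv_eq_zero (hαmono (Nat.lt_succ_self j))
      hhcont.continuousOn (by rw [(hαspec j).2, (hαspec (j+1)).2])
    exact ⟨x, hx1, hx2⟩
  have hα2πmem : h (α 0 + 2*π) = 0 := by rw [hhper, (hαspec 0).2]
  have hαlast : α (2*n-1) < α 0 + 2*π := by
    have h1 : α (2*n-1) < t' (2*n) := by
      have := (hαspec (2*n-1)).1.2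
      have e : 2*n-1+1 = 2*n := by omega
      rwa [e] at this
    have h2 : t' 0 < α 0 := (hαspec 0).1.1
    rw [ht2n] at h1
    linarith
  have hlast : ∃ x, x ∈ Set.Ioo (α (2*n-1)) (α 0 + 2*π) ∧ deriv h x = 0 := by
    obtain ⟨x, hx1, hx2⟩ := exists_deriv_eq_zero hαlast hhcont.continuousOn
      (by rw [(hαspec (2*n-1)).2, hα2πmem])
    exact ⟨x, hx1, hx2⟩
  set β : ℕ → ℝ := fun j => if j = 2*n-1 then hlast.choose else (hrolle j).choose with hβ
  have hβzero : ∀ j, deriv h (β j) = 0 := by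
    intro j
    by_cases hj : j = 2*n-1
    · simp only [hβ, if_pos hj]; exact hlast.choose_spec.2
    · simp only [hβ, if_neg hj]; exact (hrolle j).choose_spec.2
  have hβmem : ∀ j, j ≠ 2*n-1 → β j ∈ Set.Ioo (α j) (α (j+1)) := by
    intro j hj
    simp only [hβ, if_neg hj]
    exact (hrolle j).choose_spec.1
  have hβlast : β (2*n-1) ∈ Set.Ioo (α (2*n-1)) (α 0 + 2*π) := by
    simp only [hβ, if_pos rfl]
    exact hlast.choose_spec.1
  -- β is strictly monotone below 2n, bounded in (α 0, α 0 + 2π)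
  have hβbound : ∀ j < 2*n, α 0 < β j ∧ β j < α 0 + 2*π := by
    intro j hj
    have hub : ∀ i, i ≤ 2*n-1 → α i < α 0 + 2*π := by
      intro i hi
      calc α i ≤ α (2*n-1) := hαmono.monotone hi
        _ < α 0 + 2*π := hαlast
    by_cases hj' : j = 2*n-1
    · subst hj'
      exact ⟨lt_of_le_of_lt (hαmono.monotone (Nat.zero_le _)) hβlast.1, hβlast.2⟩
    · have hmem := hβmem j hj'
      constructor
      · exact lt_of_le_of_lt (hαmono.monotone (Nat.zero_le _)) hmem.1
      · exact lt_trans hmem.2 (hub (j+1) (by omega))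
  have hβmono : ∀ i j, i < j → j < 2*n → β i < β j := by
    intro i j hij hj
    have hi' : i ≠ 2*n-1 := by omega
    have h1 : β i < α (i+1) := (hβmem i hi').2
    by_cases hj' : j = 2*n-1
    · subst hj'
      calc β i < α (i+1) := h1
        _ ≤ α (2*n-1) := hαmono.monotone (by omega)
        _ < β (2*n-1) := hβlast.1
    · calc β i < α (i+1) := h1
        _ ≤ α j := hαmono.monotone (by omega)
        _ < β j := (hβmem j hj').1
  -- main case split: either h' vanishes identically (h constant) or we count roots
  by_cases hderiv0 : ∀ x : ℝ, deriv h x = 0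
  · have hconst := is_const_of_deriv_eq_zero (fun x => (hh' x).differentiableAt) hderiv0 (t' 0) (t' 1)
    have h0 := halt 0
    have h1 := halt 1
    rw [pow_zero, one_mul] at h0
    rw [pow_one, neg_one_mul] at h1
    linarith
  push_neg at hderiv0
  obtain ⟨w, hw⟩ := hderiv0
  -- complex-polynomial root counting
  have hndeg : p.natDegree ≤ n := Polynomial.natDegree_le_iff_degree_le.2 hdeg
  have hrdeg : r.natDegree ≤ n - 1 := le_trans (Polynomial.natDegree_derivative_le p) (by omega)
  set v : ℂ := Complex.exp ((θ₀:ℂ) * Complex.I) with hv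
  have hv0 : v ≠ 0 := Complex.exp_ne_zero _
  set H : Polynomial ℂ := Polynomial.C ((((n:ℝ)*A : ℝ) : ℂ)/2 * (v^n)⁻¹) * X^(2*n)
      + Polynomial.C ((((n:ℝ)*A : ℝ) : ℂ)/2 * v^n)
      + Polynomial.C ((2*Complex.I)⁻¹) * ((X^2 - 1) * Phi (n-1) r) with hH
  have hHeval : ∀ s : ℝ, H.eval (Complex.exp ((s:ℂ) * Complex.I)) =
      Complex.exp ((s:ℂ) * Complex.I)^n * ((h₁ s : ℝ) : ℂ) := by
    intro s
    have hphi := Phi_eval (n-1) r hrdeg s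
    set u : ℂ := Complex.exp ((s:ℂ) * Complex.I) with hu
    have hu0 : u ≠ 0 := Complex.exp_ne_zero _
    have e1 : H.eval u = (((n:ℝ)*A : ℝ) : ℂ)/2 * (v^n)⁻¹ * u^(2*n)
        + (((n:ℝ)*A : ℝ) : ℂ)/2 * v^n
        + (2*Complex.I)⁻¹ * ((u^2 - 1) * (u^(n-1) * ((r.eval (Real.cos s) : ℝ) : ℂ))) := by
      simp only [hH, Polynomial.eval_add, Polynomial.eval_mul, Polynomial.eval_pow,
        Polynomial.eval_C, Polynomial.eval_X, Polynomial.eval_sub, Polynomial.eval_one]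
      rw [hphi]
    have h4 : ((((n:ℝ)*(s-θ₀) : ℝ)) : ℂ) * Complex.I = (n:ℕ) * ((s:ℂ) * Complex.I) + -((n:ℕ) * ((θ₀:ℂ) * Complex.I)) := by
      push_cast
      ring
    have hc : ((Real.cos ((n:ℝ)*(s-θ₀)) : ℝ) : ℂ) = (u^n * (v^n)⁻¹ + (u^n * (v^n)⁻¹)⁻¹)/2 := by
      rw [Complex.ofReal_cos, Complex.cos, neg_mul, Complex.exp_neg, h4, Complex.exp_add,
        Complex.exp_neg, Complex.exp_nat_mul, Complex.exp_nat_mul, ← hu, ← hv]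
    have hs' : ((Real.sin s : ℝ) : ℂ) = (u⁻¹ - u) * Complex.I / 2 := by
      rw [Complex.ofReal_sin, Complex.sin, neg_mul, Complex.exp_neg, ← hu]
    have e2 : ((h₁ s : ℝ) : ℂ) = (((n:ℝ)*A : ℝ) : ℂ) * ((u^n * (v^n)⁻¹ + (u^n * (v^n)⁻¹)⁻¹)/2)
        + ((u⁻¹ - u) * Complex.I / 2) * ((r.eval (Real.cos s) : ℝ) : ℂ) := by
      have h3 : h₁ s = ((n:ℝ)*A)*Real.cos ((n:ℝ)*(s-θ₀)) + Real.sin s * r.eval (Real.cos s) := by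
        simp only [hh₁, hD]; ring
      have e2' : ((h₁ s : ℝ) : ℂ) = (((n:ℝ)*A : ℝ):ℂ) * ((Real.cos ((n:ℝ)*(s-θ₀)) : ℝ):ℂ)
          + ((Real.sin s : ℝ):ℂ) * ((r.eval (Real.cos s) : ℝ):ℂ) := by
        rw [h3]; push_cast; ring
      rw [e2', hc, hs']
    rw [e1, e2]
    have hp1 : u^(2*n) = (u^(n-1))^2 * u^2 := by
      rw [← pow_mul, ← pow_add]; congr 1; omega
    have hp2 : u^n = u^(n-1) * u := by
      conv_lhs => rw [show n = (n-1) + 1 by omega]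
      rw [pow_succ]
    have hp3 : v^n = v^(n-1) * v := by
      conv_lhs => rw [show n = (n-1) + 1 by omega]
      rw [pow_succ]
    have hI : ((2:ℂ)*Complex.I)⁻¹ = -Complex.I/2 := by
      rw [mul_inv, Complex.inv_I]; ring
    rw [hp1, hp2, hp3, hI]
    set U : ℂ := u^(n-1) with hU
    set V : ℂ := v^(n-1) with hV
    have hU0 : U ≠ 0 := pow_ne_zero _ hu0
    have hV0 : V ≠ 0 := pow_ne_zero _ hv0
    set a : ℂ := (((n:ℝ)*A : ℝ) : ℂ) with ha
    set R : ℂ := ((r.eval (Real.cos s) : ℝ) : ℂ) with hR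
    have hw : (V*v) * (V*v)⁻¹ = 1 := mul_inv_cancel₀ (mul_ne_zero hV0 hv0)
    have hx : (U*u*(V*v)⁻¹) * (U*u*(V*v)⁻¹)⁻¹ = 1 :=
      mul_inv_cancel₀ (mul_ne_zero (mul_ne_zero hU0 hu0) (inv_ne_zero (mul_ne_zero hV0 hv0)))
    have hy : u * u⁻¹ = 1 := mul_inv_cancel₀ hu0
    linear_combination (a/2*(U*u*(U*u*(V*v)⁻¹)⁻¹))*hw + (-(a/2)*(V*v))*hx
      + (-(Complex.I/2)*R*U*u + (-(Complex.I/2)*R*U*(1-u)))*hy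
  -- degree bound
  have hHdeg : H.natDegree ≤ 2*n := by
    apply Polynomial.natDegree_le_iff_degree_le.2
    simp only [hH]
    refine (Polynomial.degree_add_le _ _).trans (max_le ((Polynomial.degree_add_le _ _).trans (max_le ?_ ?_)) ?_)
    · refine (Polynomial.degree_mul_le _ _).trans ?_
      have h1 : (Polynomial.C ((((n:ℝ)*A : ℝ) : ℂ)/2 * (v^n)⁻¹)).degree ≤ 0 := Polynomial.degree_C_le
      have h2 : (X^(2*n) : Polynomial ℂ).degree ≤ (2*n : ℕ) := (Polynomial.degree_X_pow _).le
      calc _ ≤ (0 : WithBot ℕ) + ((2*n : ℕ) : WithBot ℕ) := by gcongr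
        _ = ((2*n : ℕ) : WithBot ℕ) := zero_add _
    · exact Polynomial.degree_C_le.trans (by exact_mod_cast WithBot.coe_le_coe.2 (Nat.zero_le (2*n)))
    · refine (Polynomial.degree_mul_le _ _).trans ?_
      have h1 : ((X^2 - 1 : Polynomial ℂ) * Phi (n-1) r).degree ≤ (2 + 2*(n-1) : ℕ) := by
        refine (Polynomial.degree_mul_le _ _).trans ?_
        have h2 : (X^2 - 1 : Polynomial ℂ).degree ≤ (2:ℕ) := by
          refine (Polynomial.degree_sub_le _ _).trans (max_le (Polynomial.degree_X_pow _).le ?_)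
          exact Polynomial.degree_one_le.trans (by exact_mod_cast WithBot.coe_le_coe.2 (Nat.zero_le 2))
        calc _ ≤ ((2:ℕ) : WithBot ℕ) + ((2*(n-1) : ℕ) : WithBot ℕ) := by
              gcongr
              exact Phi_degree (n-1) r
          _ = ((2 + 2*(n-1) : ℕ) : WithBot ℕ) := by rw [← Nat.cast_add]
      calc _ ≤ (0 : WithBot ℕ) + ((2 + 2*(n-1) : ℕ) : WithBot ℕ) := by
            gcongr
            exact Polynomial.degree_C_le
        _ = ((2 + 2*(n-1) : ℕ) : WithBot ℕ) := zero_add _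
        _ ≤ ((2*n : ℕ) : WithBot ℕ) := by exact_mod_cast WithBot.coe_le_coe.2 (by omega)
  -- H is not the zero polynomial
  have hHne : H ≠ 0 := by
    intro h0
    have := hHeval w
    rw [h0] at this
    simp only [Polynomial.eval_zero] at this
    have hh₁w : h₁ w ≠ 0 := by rw [← hderivh]; exact hw
    have : Complex.exp ((w:ℂ) * Complex.I)^n * ((h₁ w : ℝ) : ℂ) ≠ 0 :=
      mul_ne_zero (pow_ne_zero _ (Complex.exp_ne_zero _)) (by exact_mod_cast hh₁w)
    exact this (by rw [← hHeval w, h0, Polynomial.eval_zero])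
  -- v is a root of H of multiplicity ≥ 2
  have hrootv : H.IsRoot v := by
    have := hHeval θ₀
    rw [← hv] at this
    rw [Polynomial.IsRoot, this, hh₁θ₀]
    simp
  have hEx : HasDerivAt (fun t : ℝ => Complex.exp ((t:ℂ) * Complex.I)) (v * Complex.I) θ₀ := by
    have h5 : HasDerivAt (fun t : ℝ => ((t:ℝ) : ℂ)) 1 θ₀ := by
      simpa using (hasDerivAt_id θ₀).ofReal_comp
    have h6 := h5.mul_const Complex.I
    have h7 := h6.cexp
    simpa [hv] using h7
  have hrootv' : (Polynomial.derivative H).eval v = 0 := by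
    have hF1 : HasDerivAt (fun t : ℝ => H.eval (Complex.exp ((t:ℂ) * Complex.I)))
        ((v * Complex.I) • (Polynomial.derivative H).eval v) θ₀ := by
      have houter := Polynomial.hasDerivAt H v
      rw [hv] at houter
      exact HasDerivAt.scomp (x := θ₀) houter hEx
    have hpow : HasDerivAt (fun t : ℝ => Complex.exp ((t:ℂ) * Complex.I)^n)
        ((v * Complex.I) • ((n:ℂ) * v^(n-1))) θ₀ := by
      have houter : HasDerivAt (fun z : ℂ => z^n) ((n:ℂ) * v^(n-1)) v := by
        simpa using hasDerivAt_pow n v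
      rw [hv] at houter
      exact HasDerivAt.scomp (x := θ₀) houter hEx
    have hF2 := hpow.mul hh₁'θ₀.ofReal_comp
    have hfun : (fun t : ℝ => H.eval (Complex.exp ((t:ℂ) * Complex.I)))
        = (fun t : ℝ => Complex.exp ((t:ℂ) * Complex.I)^n * ((h₁ t : ℝ) : ℂ)) := funext hHeval
    have hF2' : HasDerivAt (fun t : ℝ => H.eval (Complex.exp ((t:ℂ) * Complex.I)))
        ((v * Complex.I) • ((n:ℂ) * v^(n-1)) * ((h₁ θ₀ : ℝ) : ℂ)
          + (Complex.exp ((θ₀:ℂ) * Complex.I))^n * ((0:ℝ) : ℂ)) θ₀ := by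
      rw [hfun]; exact hF2
    have huniq := hF1.unique hF2'
    rw [hh₁θ₀] at huniq
    simp only [Complex.ofReal_zero, mul_zero, add_zero, smul_eq_mul] at huniq
    have hvI : v * Complex.I ≠ 0 := mul_ne_zero hv0 Complex.I_ne_zero
    exact (mul_eq_zero.1 huniq).resolve_left hvI
  have hmult : 1 < H.rootMultiplicity v :=
    (Polynomial.one_lt_rootMultiplicity_iff_isRoot hHne).2 ⟨hrootv, hrootv'⟩
  -- the 2n simple roots from Rolle points
  classical
  set f : ℕ → ℂ := fun j => Complex.exp ((β j : ℂ) * Complex.I) with hf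
  have hfroot : ∀ j, H.eval (f j) = 0 := by
    intro j
    rw [hf]
    have := hHeval (β j)
    rw [this]
    have : h₁ (β j) = 0 := by rw [← hderivh]; exact hβzero j
    rw [this]
    simp
  have hinj : Set.InjOn f (Finset.range (2*n)) := by
    have key : ∀ i j : ℕ, i < j → j < 2*n → f i ≠ f j := by
      intro i j hij hj2 heq
      have hlt : β i < β j := hβmono i j hij hj2
      have hbi := hβbound i (lt_trans hij hj2)
      have hbj := hβbound j hj2
      have hd2 : β j - β i < 2*π := by linarith [hbi.1, hbj.2]
      rw [hf] at heq
      obtain ⟨k, hk⟩ := Complex.exp_eq_exp_iff_exists_int.1 heq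
      have him := congrArg Complex.im hk
      simp only [Complex.add_im, Complex.mul_im, Complex.ofReal_re, Complex.ofReal_im,
        Complex.I_im, Complex.I_re, Complex.intCast_im, Complex.intCast_re] at him
      have him' : (β i : ℝ) = β j + (k : ℝ) * (2*π) := by
        simpa using him
      have hk1 : (k : ℝ) * (2*π) = β i - β j := by linarith
      have hkneg : (-1 : ℝ) < k := by
        by_contra hc
        push_neg at hc
        have : (k:ℝ) * (2*π) ≤ (-1) * (2*π) := by
          apply mul_le_mul_of_nonneg_right hc (by positivity)
        linarith
      have hkpos : (k : ℝ) < 0 := by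
        by_contra hc
        push_neg at hc
        have : (0:ℝ) ≤ (k:ℝ) * (2*π) := by positivity
        linarith
      have hik1 : (-1 : ℤ) < k := by exact_mod_cast hkneg
      have hik2 : k < 0 := by exact_mod_cast hkpos
      omega
    intro i hi j hj heq
    simp only [Finset.coe_range, Set.mem_Iio] at hi hj
    rcases Nat.lt_trichotomy i j with h' | h' | h'
    · exact absurd heq (key i j h' hj)
    · exact h'
    · exact absurd heq.symm (key j i h' hi)
  set S : Finset ℂ := Finset.image f (Finset.range (2*n)) with hS
  have hScard : S.card = 2*n := by
    rw [hS, Finset.card_image_of_injOn hinj, Finset.card_range]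
  set MS : Multiset ℂ := Multiset.replicate 2 v + (S.erase v).val with hMS
  have hle : MS ≤ H.roots := by
    rw [Multiset.le_iff_count]
    intro z
    rw [hMS, Multiset.count_add, Polynomial.count_roots, Multiset.count_replicate]
    by_cases hz : v = z
    · rw [if_pos hz]
      have h0 : Multiset.count z (S.erase v).val = 0 := by
        rw [Multiset.count_eq_zero]
        intro hmem
        rw [← hz] at hmem
        exact (Finset.notMem_erase v S) hmem
      rw [h0, ← hz]
      omega
    · rw [if_neg hz]
      by_cases hzS : z ∈ S.erase v
      · have h1 : Multiset.count z (S.erase v).val = 1 :=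
          Multiset.count_eq_one_of_mem (S.erase v).nodup hzS
        have hzS' : z ∈ S := Finset.mem_of_mem_erase hzS
        obtain ⟨j, hj, hjz⟩ := Finset.mem_image.1 hzS'
        have hroot : H.IsRoot z := by rw [← hjz]; exact hfroot j
        have hpos := (Polynomial.rootMultiplicity_pos hHne).2 hroot
        omega
      · rw [Multiset.count_eq_zero.2 (fun hc => hzS hc)]
        omega
  have hcard : Multiset.card MS = 2 + (S.erase v).card := by
    rw [hMS, Multiset.card_add, Multiset.card_replicate]
    rfl
  have herase : 2*n - 1 ≤ (S.erase v).card := by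
    by_cases hvS : v ∈ S
    · rw [Finset.card_erase_of_mem hvS, hScard]
    · rw [Finset.erase_eq_of_notMem hvS, hScard]
      omega
  have hfinal := Multiset.card_le_card hle
  have hroots := Polynomial.card_roots' H
  omega

theorem small_on_grid_implies_small_chebNorm (n : ℕ) (hn : 1 ≤ n)
    (p : Polynomial ℝ) (hdeg : p.degree ≤ n) (θ₀ : ℝ)
    (hθ₀ : θ₀ ∈ Set.Icc (0 : ℝ) (π / (9 * n)))
    (hp : ∀ k : ℕ, k < 9 * n → |p.eval (Real.cos (θ₀ + k * π / (9 * n)))| ≤ 1) :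
    chebNorm p < 5 / 3 := by
  have hπ := Real.pi_pos
  have hn0 : (0:ℝ) < n := by exact_mod_cast hn
  set δ : ℝ := π / (9 * n) with hδ
  have hδ0 : 0 < δ := by positivity
  -- the maximum of |p| on [-1,1]
  obtain ⟨x₀, hx₀, hmax⟩ := (isCompact_Icc (a := (-1:ℝ)) (b := 1)).exists_isMaxOn
    ⟨0, by norm_num⟩ ((continuous_abs.comp (Polynomial.continuous p)).continuousOn)
  set M := |p.eval x₀| with hM
  have hMb : ∀ x ∈ Set.Icc (-1:ℝ) 1, |p.eval x| ≤ M := fun x hx => hmax hx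
  have hMθ : ∀ t : ℝ, |p.eval (Real.cos t)| ≤ M :=
    fun t => hMb _ ⟨Real.neg_one_le_cos t, Real.cos_le_one t⟩
  have hM0 : 0 ≤ M := abs_nonneg _
  -- Bernstein-type bound via bernstein_aux for p and -p
  have hD : ∀ t : ℝ, |p.derivative.eval (Real.cos t) * (-Real.sin t)| ≤ n * M := by
    intro t
    rw [abs_le]
    constructor
    · have hneg := bernstein_aux n hn (-p) (by rwa [Polynomial.degree_neg]) M
        (fun s => by simpa using hMθ s) t
      simp only [map_neg, Polynomial.eval_neg, neg_mul] at hneg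
      linarith
    · exact bernstein_aux n hn p hdeg M hMθ t
  -- Lipschitz bound via MVT
  have hq' : ∀ t : ℝ, HasDerivAt (fun s => p.eval (Real.cos s))
      (p.derivative.eval (Real.cos t) * (-Real.sin t)) t := by
    intro t
    have := (Polynomial.hasDerivAt p (Real.cos t)).comp t (Real.hasDerivAt_cos t)
    simpa [Function.comp_def] using this
  have hlip : ∀ a b : ℝ, |p.eval (Real.cos a) - p.eval (Real.cos b)| ≤ (n*M) * |a - b| := by
    intro a b
    have := Convex.norm_image_sub_le_of_norm_deriv_le (f := fun s => p.eval (Real.cos s))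
      (s := Set.univ) (C := n*M) (fun x _ => (hq' x).differentiableAt)
      (fun x _ => by rw [(hq' x).deriv, Real.norm_eq_abs]; exact hD x)
      convex_univ (Set.mem_univ b) (Set.mem_univ a)
    simpa [Real.norm_eq_abs] using this
  -- grid coverage
  have hcover : ∀ t ∈ Set.Icc (0:ℝ) π, ∃ k : ℕ, k < 9*n ∧ |t - (θ₀ + k*π/(9*n))| ≤ δ := by
    intro t ht
    obtain ⟨ht0, htπ⟩ := ht
    obtain ⟨hθ₀0, hθ₀δ⟩ := hθ₀
    by_cases htθ : t ≤ θ₀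
    · refine ⟨0, by omega, ?_⟩
      simp only [Nat.cast_zero, zero_mul, zero_div, add_zero]
      rw [abs_le]
      constructor <;> [linarith; linarith]
    push_neg at htθ
    set j := ⌊(t - θ₀)/δ⌋₊ with hj
    have hfl : (j:ℝ) ≤ (t - θ₀)/δ := Nat.floor_le (div_nonneg (by linarith) hδ0.le)
    have hfl2 : (t - θ₀)/δ < j + 1 := Nat.lt_floor_add_one _
    have hjδ : (j:ℝ)*δ ≤ t - θ₀ := by
      rw [← le_div_iff₀ hδ0]; exact hfl
    have hjδ2 : t - θ₀ < ((j:ℝ)+1)*δ := by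
      rw [← div_lt_iff₀ hδ0]; exact hfl2
    by_cases hjn : j < 9*n
    · refine ⟨j, hjn, ?_⟩
      have he : (j:ℝ)*π/(9*n) = j*δ := by rw [hδ]; ring
      rw [he, abs_le]
      constructor <;> [linarith; linarith]
    · push_neg at hjn
      have h9 : ((9*n : ℕ):ℝ) ≤ (j:ℝ) := by exact_mod_cast hjn
      have h9' : (9*(n:ℝ))*δ = π := by
        rw [hδ]; field_simp
      have htb : θ₀ + π ≤ t := by
        have : (9*(n:ℝ))*δ ≤ (j:ℝ)*δ := by
          apply mul_le_mul_of_nonneg_right _ hδ0.le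
          push_cast at h9 ⊢; linarith
        rw [h9'] at this
        linarith
      refine ⟨9*n - 1, by omega, ?_⟩
      have hc : ((9*n - 1 : ℕ):ℝ) = 9*(n:ℝ) - 1 := by
        have : (1:ℕ) ≤ 9*n := by omega
        push_cast [this]
        ring
      have he : ((9*n - 1 : ℕ):ℝ)*π/(9*n) = (9*(n:ℝ) - 1)*δ := by
        rw [hc, hδ]; ring
      rw [he, abs_le]
      have hexp : (9*(n:ℝ) - 1)*δ = π - δ := by
        rw [← h9']; ring
      rw [hexp]
      constructor <;> [linarith; linarith]
  -- key bound : M ≤ 1 + n*M*δ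
  have harc0 : Real.arccos x₀ ∈ Set.Icc (0:ℝ) π := ⟨Real.arccos_nonneg _, Real.arccos_le_pi _⟩
  obtain ⟨k, hk, hkd⟩ := hcover (Real.arccos x₀) harc0
  have hcosk : Real.cos (Real.arccos x₀) = x₀ := Real.cos_arccos hx₀.1 hx₀.2
  have hkey : M ≤ 1 + (n*M)*δ := by
    have h1 : |p.eval (Real.cos (Real.arccos x₀)) - p.eval (Real.cos (θ₀ + k*π/(9*n)))|
        ≤ (n*M) * |Real.arccos x₀ - (θ₀ + k*π/(9*n))| := hlip _ _
    have h2 := hp k hk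
    have h3 : M ≤ |p.eval (Real.cos (θ₀ + k*π/(9*n)))|
        + |p.eval (Real.cos (Real.arccos x₀)) - p.eval (Real.cos (θ₀ + k*π/(9*n)))| := by
      calc M = |p.eval (Real.cos (Real.arccos x₀))| := by rw [hM, hcosk]
        _ = |p.eval (Real.cos (θ₀ + k*π/(9*n)))
            + (p.eval (Real.cos (Real.arccos x₀)) - p.eval (Real.cos (θ₀ + k*π/(9*n))))| := by
              congr 1
              ring
        _ ≤ _ := abs_add_le _ _
    have h4 : (n*M) * |Real.arccos x₀ - (θ₀ + k*π/(9*n))| ≤ (n*M)*δ := by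
      apply mul_le_mul_of_nonneg_left _ (by positivity)
      have he : k*π/(9*(n:ℝ)) = (k:ℝ)*π/(9*n) := by norm_num
      exact hkd
    linarith
  -- conclude
  have h9π : (0:ℝ) < 9 - π := by nlinarith [Real.pi_lt_d2]
  have hnδ : (n:ℝ)*δ = π/9 := by
    rw [hδ]; field_simp
  have hMfin : M ≤ 9/(9 - π) := by
    rw [le_div_iff₀ h9π]
    have : (n*M)*δ = M*(π/9) := by rw [mul_comm (n:ℝ) M, mul_assoc, hnδ]
    rw [this] at hkey
    nlinarith
  have hlt : 9/(9 - π) < 5/3 := by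
    rw [div_lt_div_iff₀ h9π (by norm_num : (0:ℝ) < 3)]
    nlinarith [Real.pi_lt_d2]
  have hsup : chebNorm p ≤ 9/(9 - π) := by
    rw [chebNorm]
    haveI : Nonempty (Set.Icc (-1:ℝ) 1) := ⟨⟨0, by norm_num⟩⟩
    exact ciSup_le fun x => (hMb x x.2).trans hMfin
  exact lt_of_le_of_lt hsup hlt
end
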